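/- Let d ≥ 2, let X be a random vector in ℝ^d distributed according to the standard Gaussian measure N(0, I_d), and let v ∈ ℝ^d be a fixed unit vector. For any target false positive rate δ ∈ (0, 1], if the threshold τ ∈ [0, 1] satisfies τ ≥ √(2·ln(1/δ)/(d−1)), then the probability that ⟨X, v⟩ ≥ τ‖X‖ is at most δ. -/

import Mathlib

open MeasureTheory Real
open scoped RealInnerProductSpace ENNReal

/-- The standard Gaussian measure `N(0, I_d)` on `ℝ^d`, realized as `EuclideanSpace ℝ (Fin d)`:
the product of `d` one-dimensional standard normal distributions. -/
noncomputable def stdGaussian (d : ℕ) : Measure (EuclideanSpace ℝ (Fin d)) :=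
  (Measure.pi fun _ : Fin d => ProbabilityTheory.gaussianReal 0 1).map
    (MeasurableEquiv.toLp 2 (Fin d → ℝ))

open ProbabilityTheory

lemma lintegral_pi_prod {n : ℕ} (μ : Measure ℝ) [SigmaFinite μ] (g : Fin n → ℝ → ℝ≥0∞)
    (hg : ∀ i, Measurable (g i)) :
    ∫⁻ y, ∏ i, g i (y i) ∂(Measure.pi fun _ : Fin n => μ) = ∏ i, ∫⁻ x, g i x ∂μ := by
  induction n with
  | zero => simp
  | succ n ih =>
      have hpres := (measurePreserving_piFinSuccAbove (fun _ : Fin (n+1) => μ) 0).symm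
      rw [← hpres.map_eq, lintegral_map_equiv]
      simp_rw [MeasurableEquiv.piFinSuccAbove_symm_apply, Fin.insertNthEquiv,
        Equiv.coe_fn_mk, Fin.insertNth_zero, Fin.prod_univ_succ, Fin.cons_zero, Fin.cons_succ]
      simp only [Fin.zero_succAbove, cast_eq]
      have hm : Measurable (fun z : Fin n → ℝ => ∏ i : Fin n, g i.succ (z i)) :=
        Finset.measurable_prod _ fun i _ => (hg i.succ).comp (measurable_pi_apply i)
      rw [lintegral_prod_mul (hg 0).aemeasurable hm.aemeasurable,
        ih (fun i => g i.succ) (fun i => hg i.succ)]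

lemma map_withDensity_equiv {α β : Type*} [MeasurableSpace α] [MeasurableSpace β]
    (μ : Measure α) (e : α ≃ᵐ β) {f : α → ℝ≥0∞} (hf : Measurable f) :
    (μ.withDensity f).map e = (μ.map e).withDensity (f ∘ e.symm) := by
  ext S hS
  rw [Measure.map_apply e.measurable hS,
    withDensity_apply _ (hS.preimage e.measurable),
    withDensity_apply _ hS,
    setLIntegral_map hS (hf.comp e.symm.measurable) e.measurable]
  simp

lemma pi_gaussian_eq (d : ℕ) :
    (Measure.pi fun _ : Fin d => gaussianReal 0 1) =
      (volume : Measure (Fin d → ℝ)).withDensity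
        (fun y => ∏ i, gaussianPDF 0 1 (y i)) := by
  refine Measure.pi_eq fun s hs => ?_
  rw [withDensity_apply _ (MeasurableSet.univ_pi hs)]
  have : ∀ y : Fin d → ℝ, (Set.univ.pi s).indicator (fun y => ∏ i, gaussianPDF 0 1 (y i)) y
      = ∏ i, (s i).indicator (gaussianPDF 0 1) (y i) := by
    intro y
    by_cases hy : y ∈ Set.univ.pi s
    · rw [Set.indicator_of_mem hy]
      exact Finset.prod_congr rfl fun i _ =>
        (Set.indicator_of_mem (hy i (Set.mem_univ i)) _).symm
    · rw [Set.indicator_of_notMem hy]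
      simp only [Set.mem_univ_pi, not_forall] at hy
      obtain ⟨i, hi⟩ := hy
      exact (Finset.prod_eq_zero (Finset.mem_univ i)
        (by rw [Set.indicator_of_notMem hi])).symm
  rw [← lintegral_indicator (MeasurableSet.univ_pi hs) (fun y => ∏ i, gaussianPDF 0 1 (y i))]
  rw [lintegral_congr this]
  rw [volume_pi, lintegral_pi_prod _ _ (fun i => (measurable_gaussianPDF 0 1).indicator (hs i))]
  refine Finset.prod_congr rfl fun i _ => ?_
  rw [lintegral_indicator (hs i) _, gaussianReal_of_var_ne_zero 0 one_ne_zero,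
    withDensity_apply _ (hs i)]

lemma stdGaussian_eq_withDensity (d : ℕ) :
    stdGaussian d = (volume : Measure (EuclideanSpace ℝ (Fin d))).withDensity
      (fun x => ENNReal.ofReal ((Real.sqrt (2 * π))⁻¹ ^ d * Real.exp (- ‖x‖ ^ 2 / 2))) := by
  have h1 : stdGaussian d
      = ((volume : Measure (Fin d → ℝ)).withDensity
          (fun y => ∏ i, gaussianPDF 0 1 (y i))).map
            (MeasurableEquiv.toLp 2 (Fin d → ℝ)) := by
    rw [_root_.stdGaussian, pi_gaussian_eq]
  have hfm : Measurable (fun y : Fin d → ℝ => ∏ i, gaussianPDF 0 1 (y i)) :=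
    Finset.measurable_prod _ fun i _ =>
      (measurable_gaussianPDF 0 1).comp (measurable_pi_apply i)
  rw [h1, map_withDensity_equiv _ _ hfm]
  have h2 : (volume : Measure (Fin d → ℝ)).map
      (MeasurableEquiv.toLp 2 (Fin d → ℝ))
      = (volume : Measure (EuclideanSpace ℝ (Fin d))) :=
    (MeasurePreserving.symm _ (EuclideanSpace.volume_preserving_symm_measurableEquiv_toLp (Fin d))).map_eq
  rw [h2]
  congr 1
  funext x
  simp only [Function.comp_apply, MeasurableEquiv.symm_symm]
  have hx : ∀ i, ((MeasurableEquiv.toLp 2 (Fin d → ℝ)).symm x) i = x i := fun i => rfl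
  simp_rw [gaussianPDF, hx]
  rw [← ENNReal.ofReal_prod_of_nonneg (fun i _ => gaussianPDFReal_nonneg 0 1 (x i))]
  congr 1
  have : ∀ i, gaussianPDFReal 0 1 (x i)
      = (Real.sqrt (2 * π))⁻¹ * Real.exp (- (x i) ^ 2 / 2) := by
    intro i
    simp [gaussianPDFReal]
  simp_rw [this, Finset.prod_mul_distrib, Finset.prod_const, ← Real.exp_sum]
  congr 1
  · simp
  · rw [EuclideanSpace.norm_eq x]
    rw [Real.sq_sqrt (Finset.sum_nonneg fun i _ => sq_nonneg _)]
    rw [← Finset.sum_div, ← Finset.sum_neg_distrib]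
    simp [neg_div]

lemma stdGaussian_map_isometry (d : ℕ)
    (L : EuclideanSpace ℝ (Fin d) ≃ₗᵢ[ℝ] EuclideanSpace ℝ (Fin d)) :
    (stdGaussian d).map L = stdGaussian d := by
  have hFm : Measurable (fun x : EuclideanSpace ℝ (Fin d) =>
      ENNReal.ofReal ((Real.sqrt (2 * π))⁻¹ ^ d * Real.exp (- ‖x‖ ^ 2 / 2))) :=
    (measurable_const.mul (((measurable_norm.pow_const 2).neg.div_const 2).exp)).ennreal_ofReal
  have e := L.toHomeomorph.toMeasurableEquiv
  have hcoe : (L.toHomeomorph.toMeasurableEquiv : EuclideanSpace ℝ (Fin d) →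
      EuclideanSpace ℝ (Fin d)) = L := rfl
  rw [stdGaussian_eq_withDensity, ← hcoe,
    map_withDensity_equiv _ L.toHomeomorph.toMeasurableEquiv hFm]
  have hvol : (volume : Measure (EuclideanSpace ℝ (Fin d))).map
      L.toHomeomorph.toMeasurableEquiv = volume := L.measurePreserving.map_eq
  rw [hvol]
  congr 1
  funext x
  simp only [Function.comp_apply]
  congr 2
  have : ‖(L.toHomeomorph.toMeasurableEquiv.symm x : EuclideanSpace ℝ (Fin d))‖ = ‖x‖ := by
    show ‖L.symm x‖ = ‖x‖
    exact L.symm.norm_map x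
  rw [this]

lemma lintegral_exp_mul_gaussian (a : ℝ) :
    ∫⁻ x, ENNReal.ofReal (Real.exp (a * x)) ∂(gaussianReal 0 1)
      = ENNReal.ofReal (Real.exp (a ^ 2 / 2)) := by
  rw [gaussianReal_of_var_ne_zero 0 one_ne_zero,
    lintegral_withDensity_eq_lintegral_mul _ (measurable_gaussianPDF 0 1)
      (by fun_prop)]
  have heq : ∀ x : ℝ, gaussianPDF 0 1 x * ENNReal.ofReal (Real.exp (a * x))
      = ENNReal.ofReal ((Real.sqrt (2 * π))⁻¹ * Real.exp (a ^ 2 / 2)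
          * Real.exp (-2⁻¹ * (x - a) ^ 2)) := by
    intro x
    rw [gaussianPDF, ← ENNReal.ofReal_mul (gaussianPDFReal_nonneg 0 1 x)]
    congr 1
    simp only [gaussianPDFReal, NNReal.coe_one, mul_one, sub_zero]
    simp only [mul_assoc, ← Real.exp_add]
    congr 1
    ring
  simp only [Pi.mul_apply]
  rw [lintegral_congr heq]
  have hint : Integrable (fun x : ℝ => (Real.sqrt (2 * π))⁻¹ * Real.exp (a ^ 2 / 2)
      * Real.exp (-2⁻¹ * (x - a) ^ 2)) :=
    ((integrable_exp_neg_mul_sq (by norm_num : (0:ℝ) < 2⁻¹)).comp_sub_right a).const_mul _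
  rw [← ofReal_integral_eq_lintegral_ofReal hint (ae_of_all _ fun x => by positivity)]
  congr 1
  rw [integral_const_mul]
  have : ∫ x : ℝ, Real.exp (-2⁻¹ * (x - a) ^ 2)
      = ∫ x : ℝ, Real.exp (-2⁻¹ * x ^ 2) :=
    integral_sub_right_eq_self (μ := volume) (fun x => Real.exp (-2⁻¹ * x ^ 2)) a
  rw [this, integral_gaussian]
  rw [show π / 2⁻¹ = 2 * π by ring]
  field_simp

lemma lintegral_exp_neg_sq_gaussian {b : ℝ} (hb : 0 ≤ b) :
    ∫⁻ x, ENNReal.ofReal (Real.exp (-b * x ^ 2)) ∂(gaussianReal 0 1)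
      = ENNReal.ofReal ((Real.sqrt (2 * b + 1))⁻¹) := by
  rw [gaussianReal_of_var_ne_zero 0 one_ne_zero,
    lintegral_withDensity_eq_lintegral_mul _ (measurable_gaussianPDF 0 1) (by fun_prop)]
  have heq : ∀ x : ℝ, gaussianPDF 0 1 x * ENNReal.ofReal (Real.exp (-b * x ^ 2))
      = ENNReal.ofReal ((Real.sqrt (2 * π))⁻¹ * Real.exp (-(b + 2⁻¹) * x ^ 2)) := by
    intro x
    rw [gaussianPDF, ← ENNReal.ofReal_mul (gaussianPDFReal_nonneg 0 1 x)]
    congr 1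
    simp only [gaussianPDFReal, NNReal.coe_one, mul_one, sub_zero]
    simp only [mul_assoc, ← Real.exp_add]
    congr 1
    ring
  simp only [Pi.mul_apply]
  rw [lintegral_congr heq]
  have hb2 : (0:ℝ) < b + 2⁻¹ := by linarith
  have hint : Integrable (fun x : ℝ => (Real.sqrt (2 * π))⁻¹
      * Real.exp (-(b + 2⁻¹) * x ^ 2)) := (integrable_exp_neg_mul_sq hb2).const_mul _
  rw [← ofReal_integral_eq_lintegral_ofReal hint (ae_of_all _ fun x => by positivity)]
  congr 1
  rw [integral_const_mul, integral_gaussian]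
  rw [← Real.sqrt_inv, ← Real.sqrt_inv, ← Real.sqrt_mul (by positivity)]
  congr 1
  have hπ : (0:ℝ) < π := Real.pi_pos
  field_simp

lemma gaussian_tail_le {a : ℝ} (ha : 0 ≤ a) :
    gaussianReal 0 1 {x | a ≤ x} ≤ ENNReal.ofReal (Real.exp (-(a ^ 2) / 2)) := by
  have hS : MeasurableSet {x : ℝ | a ≤ x} := measurableSet_le measurable_const measurable_id
  have h1 : gaussianReal 0 1 {x | a ≤ x}
      = ∫⁻ x, {x : ℝ | a ≤ x}.indicator 1 x ∂(gaussianReal 0 1) :=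
    (lintegral_indicator_one hS).symm
  rw [h1]
  have h2 : ∀ x : ℝ, {x : ℝ | a ≤ x}.indicator 1 x
      ≤ ENNReal.ofReal (Real.exp (-(a^2)) * Real.exp (a * x)) := by
    intro x
    by_cases hx : x ∈ {x : ℝ | a ≤ x}
    · rw [Set.indicator_of_mem hx]
      simp only [Pi.one_apply]
      rw [← Real.exp_add, ← ENNReal.ofReal_one]
      refine ENNReal.ofReal_le_ofReal ?_
      rw [← Real.exp_zero]
      refine Real.exp_le_exp.mpr ?_
      have : a ≤ x := hx
      nlinarith
    · rw [Set.indicator_of_notMem hx]; exact zero_le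
  refine le_trans (lintegral_mono h2) ?_
  simp_rw [ENNReal.ofReal_mul (Real.exp_nonneg _)]
  rw [lintegral_const_mul _ (by fun_prop)]
  rw [lintegral_exp_mul_gaussian a, ← ENNReal.ofReal_mul (Real.exp_nonneg _), ← Real.exp_add]
  refine ENNReal.ofReal_le_ofReal (Real.exp_le_exp.mpr (by ring_nf; rfl))

lemma pi_event_bound (n : ℕ) {τ : ℝ} (h0 : 0 < τ) (h1 : τ < 1) :
    (Measure.pi fun _ : Fin (n + 1) => gaussianReal 0 1)
        {y | τ * Real.sqrt (∑ i, y i ^ 2) ≤ y 0}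
      ≤ ENNReal.ofReal (Real.sqrt (1 - τ ^ 2) ^ n) := by
  set γ := gaussianReal 0 1
  set c : ℝ := τ / Real.sqrt (1 - τ ^ 2) with hc
  have hτ2 : 0 < 1 - τ ^ 2 := by nlinarith
  have hcpos : 0 < c := div_pos h0 (Real.sqrt_pos.mpr hτ2)
  have hcsq : c ^ 2 = τ ^ 2 / (1 - τ ^ 2) := by
    rw [hc, div_pow, Real.sq_sqrt hτ2.le]
  -- measurability
  have hA : MeasurableSet {y : Fin (n+1) → ℝ | τ * Real.sqrt (∑ i, y i ^ 2) ≤ y 0} := by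
    refine measurableSet_le ?_ (measurable_pi_apply 0)
    exact (measurable_const.mul ((Finset.measurable_sum _ fun i _ =>
      (measurable_pi_apply i).pow_const 2).sqrt))
  -- split off coordinate 0
  have hpres := measurePreserving_piFinSuccAbove (fun _ : Fin (n+1) => γ) 0
  have hmap := (MeasurePreserving.symm _ hpres).map_eq
  rw [← hmap, Measure.map_apply (MeasurableEquiv.measurable _) hA]
  have hpre : (MeasurableEquiv.piFinSuccAbove (fun _ : Fin (n+1) => ℝ) 0).symm ⁻¹'
        {y : Fin (n+1) → ℝ | τ * Real.sqrt (∑ i, y i ^ 2) ≤ y 0}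
      = {p : ℝ × (Fin n → ℝ) | τ * Real.sqrt (p.1 ^ 2 + ∑ i, p.2 i ^ 2) ≤ p.1} := by
    ext ⟨x, z⟩
    simp only [Set.mem_preimage, Set.mem_setOf_eq,
      MeasurableEquiv.piFinSuccAbove_symm_apply, Fin.insertNthEquiv, Equiv.coe_fn_mk,
      Fin.insertNth_zero, Fin.sum_univ_succ, Fin.cons_zero, Fin.cons_succ, Fin.zero_succAbove,
      cast_eq]
  rw [hpre]
  have hB : MeasurableSet {p : ℝ × (Fin n → ℝ) | τ * Real.sqrt (p.1 ^ 2 + ∑ i, p.2 i ^ 2) ≤ p.1} := by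
    refine measurableSet_le ?_ measurable_fst
    have hm : Measurable fun p : ℝ × (Fin n → ℝ) => p.1 ^ 2 + ∑ i, p.2 i ^ 2 := by fun_prop
    exact measurable_const.mul hm.sqrt
  rw [Measure.prod_apply_symm hB]
  have hinner : ∀ z : Fin n → ℝ,
      γ ((fun x => (x, z)) ⁻¹' {p : ℝ × (Fin n → ℝ) |
          τ * Real.sqrt (p.1 ^ 2 + ∑ i, p.2 i ^ 2) ≤ p.1})
        ≤ ENNReal.ofReal (Real.exp (-(c ^ 2 / 2) * ∑ i, z i ^ 2)) := by
    intro z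
    set q : ℝ := ∑ i, z i ^ 2 with hqdef
    have hq : 0 ≤ q := Finset.sum_nonneg fun i _ => sq_nonneg _
    have hsub : ((fun x => (x, z)) ⁻¹' {p : ℝ × (Fin n → ℝ) |
          τ * Real.sqrt (p.1 ^ 2 + ∑ i, p.2 i ^ 2) ≤ p.1})
        ⊆ {x : ℝ | c * Real.sqrt q ≤ x} := by
      intro x hx
      simp only [Set.mem_preimage, Set.mem_setOf_eq] at hx ⊢
      have hx0 : 0 ≤ x := le_trans (by positivity) hx
      have hsq : Real.sqrt (x ^ 2 + q) ^ 2 = x ^ 2 + q := Real.sq_sqrt (by positivity)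
      have h2 : τ ^ 2 * (x ^ 2 + q) ≤ x ^ 2 := by
        have hms := mul_self_le_mul_self (by positivity : 0 ≤ τ * Real.sqrt (x ^ 2 + q)) hx
        nlinarith [hsq]
      have h3 : (c * Real.sqrt q) ^ 2 ≤ x ^ 2 := by
        rw [mul_pow, Real.sq_sqrt hq, hcsq, div_mul_eq_mul_div, div_le_iff₀ hτ2]
        nlinarith
      have := Real.sqrt_le_sqrt h3
      rwa [Real.sqrt_sq (by positivity), Real.sqrt_sq hx0] at this
    refine le_trans (measure_mono hsub) (le_trans (gaussian_tail_le (by positivity)) ?_)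
    refine le_of_eq ?_
    congr 1
    rw [mul_pow, Real.sq_sqrt hq]
    ring
  refine le_trans (lintegral_mono hinner) ?_
  have hprod : ∀ z : Fin n → ℝ, ENNReal.ofReal (Real.exp (-(c ^ 2 / 2) * ∑ i, z i ^ 2))
      = ∏ i : Fin n, ENNReal.ofReal (Real.exp (-(c ^ 2 / 2) * z i ^ 2)) := by
    intro z
    rw [Finset.mul_sum, Real.exp_sum,
      ENNReal.ofReal_prod_of_nonneg (fun i _ => Real.exp_nonneg _)]
  rw [lintegral_congr hprod,
    lintegral_pi_prod γ (fun _ x => ENNReal.ofReal (Real.exp (-(c ^ 2 / 2) * x ^ 2)))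
      (fun i => Measurable.ennreal_ofReal (by fun_prop)),
    Finset.prod_const, Finset.card_univ, Fintype.card_fin,
    lintegral_exp_neg_sq_gaussian (by positivity : (0:ℝ) ≤ c ^ 2 / 2)]
  have hval : (Real.sqrt (2 * (c ^ 2 / 2) + 1))⁻¹ = Real.sqrt (1 - τ ^ 2) := by
    have : 2 * (c ^ 2 / 2) + 1 = (1 - τ ^ 2)⁻¹ := by
      rw [hcsq]; field_simp; ring
    rw [this, Real.sqrt_inv, inv_inv]
  rw [hval, ENNReal.ofReal_pow (Real.sqrt_nonneg _)]

lemma gaussianReal_singleton (x : ℝ) : gaussianReal 0 1 {x} = 0 := by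
  rw [gaussianReal_apply 0 one_ne_zero {x}]
  exact setLIntegral_measure_zero _ _ (measure_singleton x)

-- τ = 1 case : the event is null

lemma pi_event_null (n : ℕ) :
    (Measure.pi fun _ : Fin (n + 2) => gaussianReal 0 1)
        {y | Real.sqrt (∑ i, y i ^ 2) ≤ y 0} = 0 := by
  refine measure_mono_null ?_
    (Measure.pi_eval_preimage_null (μ := fun _ : Fin (n+2) => gaussianReal 0 1)
      (gaussianReal_singleton 0) (i := 1))
  intro y hy
  simp only [Set.mem_setOf_eq] at hy
  have hy0 : 0 ≤ y 0 := le_trans (Real.sqrt_nonneg _) hy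
  have hsum : ∑ i, y i ^ 2 ≤ y 0 ^ 2 := by
    have := mul_self_le_mul_self (Real.sqrt_nonneg _) hy
    rwa [Real.mul_self_sqrt (Finset.sum_nonneg fun i _ => sq_nonneg _), ← pow_two] at this
  have hpair : y 0 ^ 2 + y 1 ^ 2 ≤ ∑ i, y i ^ 2 := by
    have hpair := Finset.sum_pair (f := fun i => y i ^ 2)
      (show (0 : Fin (n+2)) ≠ 1 by simp [Fin.ext_iff])
    rw [← hpair]
    exact Finset.sum_le_sum_of_subset_of_nonneg (Finset.subset_univ _)
      fun i _ _ => sq_nonneg _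
  have : y 1 ^ 2 = 0 := le_antisymm (by linarith) (sq_nonneg _)
  have : y 1 = 0 := by
    exact pow_eq_zero_iff (by norm_num) |>.mp this
  simpa [Set.mem_preimage] using this

-- transfer to pi coordinates

lemma stdGaussian_event_eq (n : ℕ) (τ : ℝ) (v : EuclideanSpace ℝ (Fin (n+2))) (hv : ‖v‖ = 1) :
    stdGaussian (n+2) {x | τ * ‖x‖ ≤ ⟪x, v⟫}
      = (Measure.pi fun _ : Fin (n+2) => gaussianReal 0 1)
          {y | τ * Real.sqrt (∑ i, y i ^ 2) ≤ y 0} := by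
  classical
  set u : EuclideanSpace ℝ (Fin (n+2)) := EuclideanSpace.single 0 1 with hu
  have hud : ‖u‖ = 1 := by simp [hu]
  set L : EuclideanSpace ℝ (Fin (n+2)) ≃ₗᵢ[ℝ] EuclideanSpace ℝ (Fin (n+2)) :=
    (Submodule.reflection (ℝ ∙ (u - v))ᗮ) with hL
  have hLu : L u = v := Submodule.reflection_sub (by rw [hud, hv])
  have hmeas : MeasurableSet {x : EuclideanSpace ℝ (Fin (n+2)) | τ * ‖x‖ ≤ ⟪x, v⟫} := by
    refine measurableSet_le (measurable_const.mul measurable_norm) ?_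
    exact (continuous_id.inner continuous_const).measurable
  have h1 : stdGaussian (n+2) {x | τ * ‖x‖ ≤ ⟪x, v⟫}
      = stdGaussian (n+2) (L ⁻¹' {x | τ * ‖x‖ ≤ ⟪x, v⟫}) := by
    conv_lhs => rw [← stdGaussian_map_isometry (n+2) L]
    rw [Measure.map_apply L.continuous.measurable hmeas]
  have h2 : L ⁻¹' {x | τ * ‖x‖ ≤ ⟪x, v⟫} = {x | τ * ‖x‖ ≤ ⟪x, u⟫} := by
    ext x
    simp only [Set.mem_preimage, Set.mem_setOf_eq, L.norm_map]
    rw [← hLu, LinearIsometryEquiv.inner_map_map]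
  rw [h1, h2, _root_.stdGaussian, Measure.map_apply (MeasurableEquiv.measurable _)]
  · congr 1
    ext y
    simp only [Set.mem_preimage, Set.mem_setOf_eq]
    have hnorm : ‖(MeasurableEquiv.toLp 2 (Fin (n+2) → ℝ)) y‖
        = Real.sqrt (∑ i, y i ^ 2) := by
      rw [EuclideanSpace.norm_eq]
      simp only [Real.norm_eq_abs, sq_abs]
      rfl
    have hinner : ⟪(MeasurableEquiv.toLp 2 (Fin (n+2) → ℝ)) y, u⟫ = y 0 := by
      rw [hu]
      rw [EuclideanSpace.inner_single_right]
      simp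
    rw [hnorm, hinner]
  · refine measurableSet_le (measurable_const.mul measurable_norm) ?_
    exact (continuous_id.inner continuous_const).measurable

instance stdGaussian_isProb (d : ℕ) : IsProbabilityMeasure (stdGaussian d) := by
  rw [_root_.stdGaussian]
  exact Measure.isProbabilityMeasure_map (MeasurableEquiv.measurable _).aemeasurable

/-- **Threshold calibration.** For `d ≥ 2`, a standard Gaussian vector `X` in `ℝ^d` and a fixed
unit vector `v`: for any target false positive rate `δ ∈ (0, 1]`, if the threshold `τ ∈ [0, 1]`
satisfies `τ ≥ √(2·ln(1/δ)/(d-1))`, then the probability that `⟪X, v⟫ ≥ τ‖X‖` (i.e. that the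
cosine similarity of `X` and `v` is at least `τ`) is at most `δ`. -/
theorem gaussian_cosine_threshold_fpr (d : ℕ) (hd : 2 ≤ d)
    (v : EuclideanSpace ℝ (Fin d)) (hv : ‖v‖ = 1)
    (δ : ℝ) (hδ : δ ∈ Set.Ioc (0 : ℝ) 1)
    (τ : ℝ) (hτ : τ ∈ Set.Icc (0 : ℝ) 1)
    (hthr : Real.sqrt (2 * Real.log (1 / δ) / ((d : ℝ) - 1)) ≤ τ) :
    (stdGaussian d {x | τ * ‖x‖ ≤ ⟪x, v⟫}).toReal ≤ δ := by
  obtain ⟨n, rfl⟩ : ∃ n, d = n + 2 := ⟨d - 2, by omega⟩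
  obtain ⟨hδ0, hδ1⟩ := hδ
  obtain ⟨hτ0, hτ1⟩ := hτ
  have hd1 : (0:ℝ) < (↑(n+2) : ℝ) - 1 := by push_cast; linarith [Nat.cast_nonneg (α := ℝ) n]
  have hprob : (stdGaussian (n+2) {x | τ * ‖x‖ ≤ ⟪x, v⟫}).toReal ≤ 1 := by
    have := prob_le_one (μ := stdGaussian (n+2)) (s := {x | τ * ‖x‖ ≤ ⟪x, v⟫})
    exact ENNReal.toReal_le_of_le_ofReal zero_le_one (by simpa using this)
  by_cases hlog : Real.log (1 / δ) ≤ 0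
  · -- then δ = 1
    have h1δ : 1 / δ ≤ 1 := by
      by_contra h
      push_neg at h
      exact absurd (Real.log_pos h) (not_lt.mpr hlog)
    have : (1:ℝ) ≤ δ := by
      rw [div_le_one hδ0] at h1δ
      linarith
    linarith
  · push_neg at hlog
    -- δ ≥ exp(-(d-1) τ²/2)
    have hτpos : 0 < τ :=
      lt_of_lt_of_le (Real.sqrt_pos.mpr (div_pos (by linarith) hd1)) hthr
    have hτsq : 2 * Real.log (1 / δ) / ((↑(n+2) : ℝ) - 1) ≤ τ ^ 2 := by
      have harg : (0:ℝ) < 2 * Real.log (1 / δ) / ((↑(n+2):ℝ) - 1) :=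
        div_pos (by linarith) hd1
      calc 2 * Real.log (1 / δ) / ((↑(n+2):ℝ) - 1)
          = Real.sqrt (2 * Real.log (1 / δ) / ((↑(n+2):ℝ) - 1)) ^ 2 :=
            (Real.sq_sqrt harg.le).symm
        _ ≤ τ ^ 2 := pow_le_pow_left₀ (Real.sqrt_nonneg _) hthr 2
    have hδexp : Real.exp (-(((↑(n+2):ℝ) - 1) * τ ^ 2 / 2)) ≤ δ := by
      have hlogδ : Real.log (1 / δ) ≤ ((↑(n+2):ℝ) - 1) * τ ^ 2 / 2 := by
        rw [div_le_iff₀ hd1] at hτsq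
        nlinarith
      have : -(((↑(n+2):ℝ) - 1) * τ ^ 2 / 2) ≤ Real.log δ := by
        rw [one_div, Real.log_inv] at hlogδ
        linarith
      calc Real.exp (-(((↑(n+2):ℝ) - 1) * τ ^ 2 / 2)) ≤ Real.exp (Real.log δ) :=
            Real.exp_le_exp.mpr this
        _ = δ := Real.exp_log hδ0
    rw [stdGaussian_event_eq n τ v hv]
    by_cases hτ1' : τ = 1
    · subst hτ1'
      simp only [one_mul]
      rw [pi_event_null n]
      simpa using hδ0.le
    · have hτlt : τ < 1 := lt_of_le_of_ne hτ1 hτ1'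
      have hbound := pi_event_bound (n+1) hτpos hτlt
      have htoReal : ((Measure.pi fun _ : Fin (n+2) => gaussianReal 0 1)
          {y | τ * Real.sqrt (∑ i, y i ^ 2) ≤ y 0}).toReal
            ≤ Real.sqrt (1 - τ ^ 2) ^ (n+1) :=
        ENNReal.toReal_le_of_le_ofReal (by positivity) hbound
      refine htoReal.trans ?_
      -- √(1-τ²)^(n+1) ≤ exp(-τ²/2)^(n+1) = exp(-(n+1)τ²/2) ≤ δ
      have hstep : Real.sqrt (1 - τ ^ 2) ≤ Real.exp (-(τ ^ 2) / 2) := by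
        have h1 : 1 - τ ^ 2 ≤ Real.exp (-(τ ^ 2)) := by
          have := Real.add_one_le_exp (-(τ ^ 2))
          linarith
        calc Real.sqrt (1 - τ ^ 2) ≤ Real.sqrt (Real.exp (-(τ ^ 2))) := Real.sqrt_le_sqrt h1
          _ = Real.exp (-(τ ^ 2) / 2) := (Real.exp_half _).symm
      calc Real.sqrt (1 - τ ^ 2) ^ (n+1) ≤ Real.exp (-(τ ^ 2) / 2) ^ (n+1) :=
            pow_le_pow_left₀ (Real.sqrt_nonneg _) hstep (n+1)
        _ = Real.exp (-(((↑(n+2):ℝ) - 1) * τ ^ 2 / 2)) := by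
            rw [← Real.exp_nat_mul]
            congr 1
            push_cast
            ring
        _ ≤ δ := hδexp
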